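/- Let N > k ≥ 2 and let 𝒜 be a family of k-element subsets of {1,…,N} such that the sumsets A + B for unordered pairs {A,B} from 𝒜 are pairwise distinct (i.e., A + B = U + V with A,B,U,V ∈ 𝒜 implies {A,B} = {U,V}). Then |𝒜| ≤ C(N-1, k-1) + N - k. -/

import Mathlib

open Finset Pointwise

private def μ (A : Finset ℤ) : ℤ := WithTop.untopD 0 A.min

private lemma μ_mem {A : Finset ℤ} (h : A.Nonempty) : μ A ∈ A := by
  obtain ⟨a, ha⟩ := Finset.min_of_nonempty h
  have : μ A = a := by simp [μ, ha]
  rw [this]; exact Finset.mem_of_min ha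

private lemma μ_le {A : Finset ℤ} {a : ℤ} (ha : a ∈ A) : μ A ≤ a := by
  obtain ⟨b, hb⟩ := Finset.min_of_nonempty ⟨a, ha⟩
  have h1 : μ A = b := by simp [μ, hb]
  have h2 := Finset.min_le ha
  rw [hb] at h2
  rw [h1]
  exact_mod_cast h2

private def nor (A : Finset ℤ) : Finset ℤ := A.image (fun x => x - μ A)

private lemma nor_add (A : Finset ℤ) : nor A + {μ A} = A := by
  have h : nor A + {μ A} = (nor A).image (· + μ A) := Finset.add_singleton _
  rw [h, nor, Finset.image_image]
  simp [Function.comp_def, sub_add_cancel]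

private lemma rec_eq {A B : Finset ℤ} (h1 : nor A = nor B) (h2 : μ A = μ B) : A = B := by
  rw [← nor_add A, ← nor_add B, h1, h2]

private lemma sum_formula (A B : Finset ℤ) : A + B = (nor A + nor B) + {μ A + μ B} := by
  conv_lhs => rw [← nor_add A, ← nor_add B]
  rw [← Finset.singleton_add_singleton]; abel

private lemma nor_card (A : Finset ℤ) : (nor A).card = A.card :=
  Finset.card_image_of_injective A sub_left_injective

private lemma zero_mem_nor {A : Finset ℤ} (h : A.Nonempty) : 0 ∈ nor A := by
  rw [nor, Finset.mem_image]
  exact ⟨μ A, μ_mem h, by ring⟩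

theorem sidon_system_upper_bound (N k : ℕ) (hk : 2 ≤ k) (hkN : k < N)
    (𝒜 : Finset (Finset ℤ))
    (hsub : ∀ A ∈ 𝒜, A ⊆ Finset.Icc (1 : ℤ) N)
    (hcard : ∀ A ∈ 𝒜, A.card = k)
    (hSidon : ∀ A ∈ 𝒜, ∀ B ∈ 𝒜, ∀ U ∈ 𝒜, ∀ V ∈ 𝒜,
      A + B = U + V → ({A, B} : Finset (Finset ℤ)) = {U, V}) :
    𝒜.card ≤ Nat.choose (N - 1) (k - 1) + N - k := by
  classical
  have hne : ∀ A ∈ 𝒜, A.Nonempty := by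
    intro A hA
    rw [← Finset.card_pos, hcard A hA]; omega
  have hμ1 : ∀ A ∈ 𝒜, 1 ≤ μ A := by
    intro A hA
    have := hsub A hA (μ_mem (hne A hA))
    exact (Finset.mem_Icc.1 this).1
  have hμub : ∀ A ∈ 𝒜, μ A ≤ (N : ℤ) + 1 - k := by
    intro A hA
    have hsubA : A ⊆ Finset.Icc (μ A) (N : ℤ) := by
      intro x hx
      exact Finset.mem_Icc.2 ⟨μ_le hx, (Finset.mem_Icc.1 (hsub A hA hx)).2⟩
    have h := Finset.card_le_card hsubA
    rw [hcard A hA, Int.card_Icc] at h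
    omega
  -- the minimality predicate
  set P : Finset ℤ → Prop := fun A => ∀ B ∈ 𝒜, nor B = nor A → μ A ≤ μ B with hP
  -- Part 1 : minimal representatives
  have claim1 : (𝒜.filter P).card ≤ Nat.choose (N - 1) (k - 1) := by
    have hmaps : ∀ A ∈ 𝒜.filter P,
        (nor A).erase 0 ∈ (Finset.Icc (1 : ℤ) ((N : ℤ) - 1)).powersetCard (k - 1) := by
      intro A hA'
      obtain ⟨hA, -⟩ := Finset.mem_filter.1 hA'
      rw [Finset.mem_powersetCard]
      constructor
      · intro y hy
        obtain ⟨hy0, hy'⟩ := Finset.mem_erase.1 hy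
        obtain ⟨x, hx, rfl⟩ := Finset.mem_image.1 hy'
        have h1 := μ_le hx
        have h2 := (Finset.mem_Icc.1 (hsub A hA hx)).2
        have h3 := hμ1 A hA
        rw [Finset.mem_Icc]
        omega
      · rw [Finset.card_erase_of_mem (zero_mem_nor (hne A hA)), nor_card, hcard A hA]
    have hinj : Set.InjOn (fun A => (nor A).erase 0) (𝒜.filter P) := by
      intro A hA' B hB' h
      obtain ⟨hA, hPA⟩ := Finset.mem_filter.1 hA'
      obtain ⟨hB, hPB⟩ := Finset.mem_filter.1 hB'
      have hnor : nor A = nor B := by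
        rw [← Finset.insert_erase (zero_mem_nor (hne A hA)),
          ← Finset.insert_erase (zero_mem_nor (hne B hB))]
        simp only at h
        rw [h]
      exact rec_eq hnor (le_antisymm (hPA B hB hnor.symm) (hPB A hA hnor))
    calc (𝒜.filter P).card
        ≤ ((Finset.Icc (1 : ℤ) ((N : ℤ) - 1)).powersetCard (k - 1)).card :=
          Finset.card_le_card_of_injOn _ hmaps hinj
      _ = Nat.choose (N - 1) (k - 1) := by
          rw [Finset.card_powersetCard, Int.card_Icc]
          congr 1
          omega
  -- auxiliary : minimum of μ over the translation class of A
  set mval : Finset ℤ → ℤ :=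
    fun A => μ ((𝒜.filter fun B => nor B = nor A).image μ) with hmval
  have hmval_ex : ∀ A ∈ 𝒜, ∃ B ∈ 𝒜, nor B = nor A ∧ μ B = mval A := by
    intro A hA
    have hne' : ((𝒜.filter fun B => nor B = nor A).image μ).Nonempty :=
      ⟨μ A, Finset.mem_image.2 ⟨A, Finset.mem_filter.2 ⟨hA, rfl⟩, rfl⟩⟩
    obtain ⟨B, hB, hBμ⟩ := Finset.mem_image.1 (μ_mem hne')
    obtain ⟨hB1, hB2⟩ := Finset.mem_filter.1 hB
    exact ⟨B, hB1, hB2, hBμ⟩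
  have hmval_le : ∀ A ∈ 𝒜, ∀ B ∈ 𝒜, nor B = nor A → mval A ≤ μ B := by
    intro A hA B hB hBA
    exact μ_le (Finset.mem_image.2 ⟨B, Finset.mem_filter.2 ⟨hB, hBA⟩, rfl⟩)
  have hnotP : ∀ A ∈ 𝒜, ¬ P A → ∃ B ∈ 𝒜, nor B = nor A ∧ μ B < μ A := by
    intro A hA hPA
    by_contra hc
    push_neg at hc
    exact hPA hc
  -- Part 2 : non-minimal elements
  have claim2 : (𝒜.filter fun A => ¬ P A).card ≤ N - k := by
    have hmaps : ∀ A ∈ 𝒜.filter fun A => ¬ P A,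
        μ A - mval A ∈ Finset.Icc (1 : ℤ) ((N : ℤ) - k) := by
      intro A hA'
      obtain ⟨hA, hPA⟩ := Finset.mem_filter.1 hA'
      obtain ⟨B, hB, hBA, hBlt⟩ := hnotP A hA hPA
      have h1 := hmval_le A hA B hB hBA
      obtain ⟨C, hC, hCA, hCμ⟩ := hmval_ex A hA
      have h2 := hμ1 C hC
      have h3 := hμub A hA
      rw [Finset.mem_Icc]
      omega
    have hinj : Set.InjOn (fun A => μ A - mval A) (𝒜.filter fun A => ¬ P A) := by
      intro A hA' A' hA'' h
      simp only at h
      obtain ⟨hA, hPA⟩ := Finset.mem_filter.1 hA'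
      obtain ⟨hA2, hPA2⟩ := Finset.mem_filter.1 hA''
      by_contra hAA
      by_cases hnor : nor A = nor A'
      · have hm : mval A = mval A' := by
          have hfe : (fun B => nor B = nor A) = (fun B => nor B = nor A') := by
            funext B; rw [hnor]
          simp only [hmval, hfe]
        exact hAA (rec_eq hnor (by omega))
      · obtain ⟨B, hB, hBA, hBμ⟩ := hmval_ex A hA
        obtain ⟨B', hB', hBA', hBμ'⟩ := hmval_ex A' hA2
        have key : A + B' = B + A' := by
          rw [sum_formula A B', sum_formula B A', hBA, hBA']
          have : μ A + μ B' = μ B + μ A' := by omega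
          rw [this]
        have hset := hSidon A hA B' hB' B hB A' hA2 key
        have hmemA : A ∈ ({B, A'} : Finset (Finset ℤ)) := by
          rw [← hset]; simp
        rcases Finset.mem_insert.1 hmemA with hAB | hAA'
        · -- A = B : contradicts non-minimality of A
          obtain ⟨C, hC, hCA, hClt⟩ := hnotP A hA hPA
          have h5 := hmval_le A hA C hC hCA
          rw [← hAB] at hBμ
          omega
        · exact hAA (Finset.mem_singleton.1 hAA')
    calc (𝒜.filter fun A => ¬ P A).card
        ≤ (Finset.Icc (1 : ℤ) ((N : ℤ) - k)).card :=
          Finset.card_le_card_of_injOn _ hmaps hinj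
      _ = N - k := by rw [Int.card_Icc]; omega
  have hsplit := Finset.card_filter_add_card_filter_not (s := 𝒜) (p := P)
  rw [Nat.add_sub_assoc hkN.le]
  omega
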